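/- For each n ≥ 1, the number of Baxter permutations of [n] equals the number of twisted Baxter permutations of [n]. -/

import Mathlib

def IsBaxter {n : ℕ} (σ : Equiv.Perm (Fin n)) : Prop :=
  (¬ ∃ (i k : Fin n) (j : ℕ) (hj : j + 1 < n),
      i.1 < j ∧ j + 1 < k.1 ∧
      σ ⟨j + 1, hj⟩ < σ i ∧ σ i < σ k ∧ σ k < σ ⟨j, Nat.lt_of_succ_lt hj⟩) ∧
  (¬ ∃ (i k : Fin n) (j : ℕ) (hj : j + 1 < n),
      i.1 < j ∧ j + 1 < k.1 ∧
      σ ⟨j, Nat.lt_of_succ_lt hj⟩ < σ k ∧ σ k < σ i ∧ σ i < σ ⟨j + 1, hj⟩)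

def IsTwistedBaxter {n : ℕ} (σ : Equiv.Perm (Fin n)) : Prop :=
  ¬ ∃ (i k : Fin n) (j : ℕ) (hj : j + 1 < n),
      i.1 < j ∧ j + 1 < k.1 ∧
      ((σ ⟨j + 1, hj⟩ < σ i ∧ σ i < σ k ∧ σ k < σ ⟨j, Nat.lt_of_succ_lt hj⟩) ∨
       (σ ⟨j + 1, hj⟩ < σ k ∧ σ k < σ i ∧ σ i < σ ⟨j, Nat.lt_of_succ_lt hj⟩))

namespace BaxterAux
open List Finset
noncomputable section
open scoped Classical






def ent (l : List ℕ) (i : ℕ) : ℕ := l.getD i 0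

theorem ent_eq_getElem (l : List ℕ) {i : ℕ} (h : i < l.length) : ent l i = l[i] :=
  List.getD_eq_getElem l 0 h

theorem ent_mem (l : List ℕ) {i : ℕ} (h : i < l.length) : ent l i ∈ l := by
  rw [ent_eq_getElem l h]; exact List.getElem_mem h

def Occ2413 (l : List ℕ) : Prop :=
  ∃ i j k, i < j ∧ j + 1 < k ∧ k < l.length ∧
    ent l (j+1) < ent l i ∧ ent l i < ent l k ∧ ent l k < ent l j

def Occ3142 (l : List ℕ) : Prop :=
  ∃ i j k, i < j ∧ j + 1 < k ∧ k < l.length ∧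
    ent l j < ent l k ∧ ent l k < ent l i ∧ ent l i < ent l (j+1)

def Occ3412 (l : List ℕ) : Prop :=
  ∃ i j k, i < j ∧ j + 1 < k ∧ k < l.length ∧
    ent l (j+1) < ent l k ∧ ent l k < ent l i ∧ ent l i < ent l j

def Bax (l : List ℕ) : Prop := ¬ Occ2413 l ∧ ¬ Occ3142 l
def Twi (l : List ℕ) : Prop := ¬ Occ2413 l ∧ ¬ Occ3412 l

def lrSet (l : List ℕ) : Finset ℕ :=
  (Finset.range l.length).filter (fun p => ∀ i < p, ent l i < ent l p)

def rlSet (l : List ℕ) : Finset ℕ :=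
  (Finset.range l.length).filter (fun p => ∀ k < l.length, p < k → ent l k < ent l p)

theorem mem_lrSet {l : List ℕ} {p : ℕ} :
    p ∈ lrSet l ↔ p < l.length ∧ ∀ i < p, ent l i < ent l p := by
  simp [lrSet]

theorem mem_rlSet {l : List ℕ} {p : ℕ} :
    p ∈ rlSet l ↔ p < l.length ∧ ∀ k < l.length, p < k → ent l k < ent l p := by
  simp [rlSet]

/-- insertion of the (fresh, maximal) value `l.length` -/
def ins (l : List ℕ) (p : ℕ) : List ℕ := l.insertIdx p l.length

theorem length_ins {l : List ℕ} {p : ℕ} (hp : p ≤ l.length) :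
    (ins l p).length = l.length + 1 := List.length_insertIdx_of_le_length hp _

theorem ent_ins_of_lt {l : List ℕ} {p k : ℕ} (hk : k < p) (hkl : k < l.length) :
    ent (ins l p) k = ent l k := by
  have h1 : k < (l.insertIdx p l.length).length :=
    lt_of_lt_of_le hkl (List.length_le_length_insertIdx)
  rw [ins, ent_eq_getElem _ h1, ent_eq_getElem _ hkl]
  exact List.getElem_insertIdx_of_lt hk h1

theorem ent_ins_self {l : List ℕ} {p : ℕ} (hp : p ≤ l.length) :
    ent (ins l p) p = l.length := by
  have h1 : p < (l.insertIdx p l.length).length := by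
    rw [List.length_insertIdx_of_le_length hp]; omega
  rw [ins, ent_eq_getElem _ h1]
  exact List.getElem_insertIdx_self h1

theorem ent_ins_of_ge {l : List ℕ} {p k : ℕ} (hk : p ≤ k) (hkl : k < l.length) :
    ent (ins l p) (k+1) = ent l k := by
  have hp : p ≤ l.length := le_of_lt (lt_of_le_of_lt hk hkl)
  have h1 : k + 1 < (l.insertIdx p l.length).length := by
    rw [List.length_insertIdx_of_le_length hp]; omega
  rw [ins, ent_eq_getElem _ h1, ent_eq_getElem _ hkl]
  obtain ⟨d, rfl⟩ := Nat.exists_eq_add_of_le hk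
  exact (List.getElem_insertIdx_of_gt (by omega) h1).trans (by simp)







-- generic rank lemmas
def rk (S : Finset ℕ) (g : ℕ) : ℕ := (S.filter (· < g)).card

theorem rk_lt_card {S : Finset ℕ} {g : ℕ} (hg : g ∈ S) : rk S g < S.card := by
  apply Finset.card_lt_card
  constructor
  · exact Finset.filter_subset _ _
  · intro hsub
    have := hsub hg
    simp at this

theorem rk_strictMono {S : Finset ℕ} {g h : ℕ} (hg : g ∈ S) (hgh : g < h) :
    rk S g < rk S h := by
  apply Finset.card_lt_card
  constructor
  · intro y hy
    simp only [Finset.mem_filter] at hy ⊢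
    exact ⟨hy.1, lt_trans hy.2 hgh⟩
  · intro hsub
    have : g ∈ S.filter (· < h) := by simp [hg, hgh]
    have := hsub this
    simp at this

theorem rk_injOn {S : Finset ℕ} {g h : ℕ} (hg : g ∈ S) (hh : h ∈ S)
    (he : rk S g = rk S h) : g = h := by
  rcases lt_trichotomy g h with h1 | h1 | h1
  · exact absurd he (Nat.ne_of_lt (rk_strictMono hg h1))
  · exact h1
  · exact absurd he.symm (Nat.ne_of_lt (rk_strictMono hh h1))

theorem rk_surj (S : Finset ℕ) : ∀ x < S.card, ∃ g ∈ S, rk S g = x := by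
  induction S using Finset.strongInductionOn with
  | _ S ih =>
    intro x hx
    have hne : S.Nonempty := Finset.card_pos.mp (by omega)
    set M := S.max' hne with hM
    have hMS : M ∈ S := S.max'_mem hne
    have hfc : S.filter (· < M) = S.erase M := by
      ext y
      simp only [Finset.mem_filter, Finset.mem_erase]
      constructor
      · rintro ⟨hy, hlt⟩; exact ⟨Nat.ne_of_lt hlt, hy⟩
      · rintro ⟨hne', hy⟩
        exact ⟨hy, lt_of_le_of_ne (S.le_max' y hy) hne'⟩
    rcases eq_or_lt_of_le (Nat.le_of_lt_succ (by omega : x < (S.card - 1) + 1)) with h1 | h1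
    · refine ⟨M, hMS, ?_⟩
      rw [rk, hfc, Finset.card_erase_of_mem hMS, h1]
    · obtain ⟨g, hg, hrk⟩ := ih (S.erase M) (Finset.erase_ssubset hMS) x
        (by rw [Finset.card_erase_of_mem hMS]; omega)
      refine ⟨g, Finset.mem_of_mem_erase hg, ?_⟩
      rw [← hrk, rk, rk]
      congr 1
      ext y
      simp only [Finset.mem_filter, Finset.mem_erase]
      constructor
      · rintro ⟨hy, hlt⟩
        refine ⟨⟨?_, hy⟩, hlt⟩
        rintro rfl
        have : g < M := lt_of_le_of_ne (S.le_max' g (Finset.mem_of_mem_erase hg))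
          (Finset.ne_of_mem_erase hg)
        omega
      · rintro ⟨⟨_, hy⟩, hlt⟩; exact ⟨hy, hlt⟩

theorem card_filter_ge (S : Finset ℕ) (g : ℕ) :
    (S.filter (fun y => g ≤ y)).card = S.card - rk S g := by
  have := Finset.card_filter_add_card_filter_not (s := S) (p := (· < g))
  simp only [not_lt] at this
  rw [rk]
  omega






theorem ent_ne {l : List ℕ} (hl : l.Nodup) {i j : ℕ} (hi : i < l.length)
    (hj : j < l.length) (hij : i ≠ j) : ent l i ≠ ent l j := by
  rw [ent_eq_getElem l hi, ent_eq_getElem l hj]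
  intro h
  exact hij (List.Nodup.getElem_inj_iff hl |>.mp h)

theorem lr_le_rl {l : List ℕ} {x y : ℕ} (hx : x ∈ lrSet l) (hy : y ∈ rlSet l) :
    x ≤ y := by
  by_contra h
  push_neg at h
  rw [mem_lrSet] at hx
  rw [mem_rlSet] at hy
  have h1 : ent l y < ent l x := hx.2 y h
  have h2 : ent l x < ent l y := hy.2 x hx.1 h
  omega

theorem zero_mem_lrSet {l : List ℕ} (hl : l ≠ []) : 0 ∈ lrSet l := by
  rw [mem_lrSet]
  exact ⟨List.length_pos_iff.mpr hl, fun i hi => absurd hi (Nat.not_lt_zero i)⟩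

theorem last_mem_rlSet {l : List ℕ} (hl : l ≠ []) : l.length - 1 ∈ rlSet l := by
  rw [mem_rlSet]
  have : 0 < l.length := List.length_pos_iff.mpr hl
  exact ⟨by omega, fun k hk hk' => by omega⟩

theorem lrSet_nonempty {l : List ℕ} (hl : l ≠ []) : (lrSet l).Nonempty := ⟨0, zero_mem_lrSet hl⟩
theorem rlSet_nonempty {l : List ℕ} (hl : l ≠ []) : (rlSet l).Nonempty :=
  ⟨l.length - 1, last_mem_rlSet hl⟩

/-- the minimum of `rlSet` is a left-to-right maximum (it is the position of
the maximal entry). -/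
theorem min_rlSet_mem_lrSet {l : List ℕ} (hl : l.Nodup) {g : ℕ} (hg : g ∈ rlSet l)
    (hmin : ∀ y ∈ rlSet l, g ≤ y) : g ∈ lrSet l := by
  have hglen : g < l.length := (mem_rlSet.mp hg).1
  have hne : l ≠ [] := by intro h; rw [h] at hglen; simp at hglen
  -- let w be the position of the maximal entry
  obtain ⟨w, hw, hwmax⟩ := Finset.exists_max_image (Finset.range l.length) (ent l)
    ⟨g, Finset.mem_range.mpr hglen⟩
  have hwlen : w < l.length := Finset.mem_range.mp hw
  have hwrl : w ∈ rlSet l := by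
    rw [mem_rlSet]
    refine ⟨hwlen, fun k hk hk' => ?_⟩
    have h1 : ent l k ≤ ent l w := hwmax k (Finset.mem_range.mpr hk)
    have h2 : ent l k ≠ ent l w := ent_ne hl hk hwlen (by omega)
    omega
  have hgw : g ≤ w := hmin w hwrl
  have : w = g := by
    by_contra hne'
    have hgw' : g < w := by omega
    have h1 : ent l w < ent l g := (mem_rlSet.mp hg).2 w hwlen hgw'
    have h2 : ent l g ≤ ent l w := hwmax g (Finset.mem_range.mpr hglen)
    omega
  subst this
  rw [mem_lrSet]
  refine ⟨hwlen, fun i hi => ?_⟩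
  have h1 : ent l i ≤ ent l w := hwmax i (Finset.mem_range.mpr (by omega))
  have h2 : ent l i ≠ ent l w := ent_ne hl (by omega) hwlen (by omega)
  omega






/-- generic vincular occurrence -/
def OccG (R : ℕ → ℕ → ℕ → ℕ → Prop) (l : List ℕ) : Prop :=
  ∃ i j k, i < j ∧ j + 1 < k ∧ k < l.length ∧
    R (ent l i) (ent l j) (ent l (j+1)) (ent l k)

section insertion
variable {l : List ℕ} {p : ℕ} {R : ℕ → ℕ → ℕ → ℕ → Prop}

/-- unshift: entries of `ins l p` at positions `≠ p` come from `l` -/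
theorem ent_ins_ne {x : ℕ} (hp : p ≤ l.length) (hx : x < l.length + 1) (hxp : x ≠ p) :
    ent (ins l p) x = ent l (if x < p then x else x - 1) := by
  rcases lt_or_gt_of_ne hxp with h | h
  · rw [if_pos h]; exact ent_ins_of_lt h (by omega)
  · rw [if_neg (by omega)]
    have : x - 1 ≥ p := by omega
    have := ent_ins_of_ge (l := l) this (by omega : x - 1 < l.length)
    rwa [Nat.sub_add_cancel (by omega : 1 ≤ x)] at this

theorem ent_ins_lt_max {x : ℕ} (hv : ∀ a ∈ l, a < l.length) (hp : p ≤ l.length)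
    (hx : x < l.length + 1) (hxp : x ≠ p) : ent (ins l p) x < l.length := by
  rw [ent_ins_ne hp hx hxp]
  exact hv _ (ent_mem l (by split <;> omega))

/-- monotone insertion for patterns whose maximal slot is the second one (`b`) -/
theorem occG_ins_of_occG_b (hv : ∀ a ∈ l, a < l.length) (hp : p ≤ l.length)
    (hR : ∀ a b c d w, R a b c d → b ≤ w → R a w c d)
    (h : OccG R l) : OccG R (ins l p) := by
  obtain ⟨i, j, k, hij, hjk, hkl, hpat⟩ := h
  have hi : i < l.length := by omega
  have hj : j < l.length := by omega
  have hj1 : j + 1 < l.length := by omega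
  rcases le_or_gt p j with hpj | hpj
  · -- p ≤ j : shift j,j+1,k by one; i shifts iff i ≥ p
    refine ⟨if i < p then i else i + 1, j + 1, k + 1, by split <;> omega, by omega,
      by rw [length_ins hp]; omega, ?_⟩
    have e1 : ent (ins l p) (if i < p then i else i + 1) = ent l i := by
      split_ifs with h'
      · exact ent_ins_of_lt h' hi
      · exact ent_ins_of_ge (by omega) hi
    have e2 : ent (ins l p) (j + 1) = ent l j := ent_ins_of_ge hpj hj
    have e3 : ent (ins l p) (j + 1 + 1) = ent l (j + 1) := ent_ins_of_ge (by omega) hj1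
    have e4 : ent (ins l p) (k + 1) = ent l k := ent_ins_of_ge (by omega) hkl
    rw [e1, e2, e3, e4]; exact hpat
  · rcases eq_or_lt_of_le (by omega : j + 1 ≤ p) with hpj1 | hpj1
    · -- p = j+1 : merge case, use inserted max as the `b` slot
      subst hpj1
      refine ⟨i, j + 1, k + 1, by omega, by omega, by rw [length_ins hp]; omega, ?_⟩
      have e1 : ent (ins l (j+1)) i = ent l i := ent_ins_of_lt (by omega) hi
      have e2 : ent (ins l (j+1)) (j + 1) = l.length := ent_ins_self hp
      have e3 : ent (ins l (j+1)) (j + 1 + 1) = ent l (j + 1) := ent_ins_of_ge (by omega) hj1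
      have e4 : ent (ins l (j+1)) (k + 1) = ent l k := ent_ins_of_ge (by omega) hkl
      rw [e1, e2, e3, e4]
      exact hR _ _ _ _ _ hpat (le_of_lt (hv _ (ent_mem l hj)))
    · -- p ≥ j+2 : i,j,j+1 unshifted, k shifts iff k ≥ p
      refine ⟨i, j, if k < p then k else k + 1, by omega, by split <;> omega,
        by rw [length_ins hp]; split <;> omega, ?_⟩
      have e1 : ent (ins l p) i = ent l i := ent_ins_of_lt (by omega) hi
      have e2 : ent (ins l p) j = ent l j := ent_ins_of_lt (by omega) hj
      have e3 : ent (ins l p) (j + 1) = ent l (j + 1) := ent_ins_of_lt (by omega) hj1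
      have e4 : ent (ins l p) (if k < p then k else k + 1) = ent l k := by
        split_ifs with h'
        · exact ent_ins_of_lt h' hkl
        · exact ent_ins_of_ge (by omega) hkl
      rw [e1, e2, e3, e4]; exact hpat

/-- monotone insertion for patterns whose maximal slot is the third one (`c`) -/
theorem occG_ins_of_occG_c (hv : ∀ a ∈ l, a < l.length) (hp : p ≤ l.length)
    (hR : ∀ a b c d w, R a b c d → c ≤ w → R a b w d)
    (h : OccG R l) : OccG R (ins l p) := by
  obtain ⟨i, j, k, hij, hjk, hkl, hpat⟩ := h
  have hi : i < l.length := by omega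
  have hj : j < l.length := by omega
  have hj1 : j + 1 < l.length := by omega
  rcases le_or_gt p j with hpj | hpj
  · refine ⟨if i < p then i else i + 1, j + 1, k + 1, by split <;> omega, by omega,
      by rw [length_ins hp]; omega, ?_⟩
    have e1 : ent (ins l p) (if i < p then i else i + 1) = ent l i := by
      split_ifs with h'
      · exact ent_ins_of_lt h' hi
      · exact ent_ins_of_ge (by omega) hi
    have e2 : ent (ins l p) (j + 1) = ent l j := ent_ins_of_ge hpj hj
    have e3 : ent (ins l p) (j + 1 + 1) = ent l (j + 1) := ent_ins_of_ge (by omega) hj1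
    have e4 : ent (ins l p) (k + 1) = ent l k := ent_ins_of_ge (by omega) hkl
    rw [e1, e2, e3, e4]; exact hpat
  · rcases eq_or_lt_of_le (by omega : j + 1 ≤ p) with hpj1 | hpj1
    · -- p = j+1 : merge, inserted max becomes the `c` slot
      subst hpj1
      refine ⟨i, j, k + 1, hij, by omega, by rw [length_ins hp]; omega, ?_⟩
      have e1 : ent (ins l (j+1)) i = ent l i := ent_ins_of_lt (by omega) hi
      have e2 : ent (ins l (j+1)) j = ent l j := ent_ins_of_lt (by omega) hj
      have e3 : ent (ins l (j+1)) (j + 1) = l.length := ent_ins_self hp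
      have e4 : ent (ins l (j+1)) (k + 1) = ent l k := ent_ins_of_ge (by omega) hkl
      rw [e1, e2, e3, e4]
      exact hR _ _ _ _ _ hpat (le_of_lt (hv _ (ent_mem l hj1)))
    · refine ⟨i, j, if k < p then k else k + 1, by omega, by split <;> omega,
        by rw [length_ins hp]; split <;> omega, ?_⟩
      have e1 : ent (ins l p) i = ent l i := ent_ins_of_lt (by omega) hi
      have e2 : ent (ins l p) j = ent l j := ent_ins_of_lt (by omega) hj
      have e3 : ent (ins l p) (j + 1) = ent l (j + 1) := ent_ins_of_lt (by omega) hj1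
      have e4 : ent (ins l p) (if k < p then k else k + 1) = ent l k := by
        split_ifs with h'
        · exact ent_ins_of_lt h' hkl
        · exact ent_ins_of_ge (by omega) hkl
      rw [e1, e2, e3, e4]; exact hpat

/-- an occurrence not involving position `p` descends to `l` -/
theorem occG_of_occG_ins_avoid (hp : p ≤ l.length) {i j k : ℕ}
    (hij : i < j) (hjk : j + 1 < k) (hkl : k < l.length + 1)
    (hi : i ≠ p) (hj : j ≠ p) (hj1 : j + 1 ≠ p) (hk : k ≠ p)
    (hpat : R (ent (ins l p) i) (ent (ins l p) j) (ent (ins l p) (j+1)) (ent (ins l p) k)) :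
    OccG R l := by
  set us : ℕ → ℕ := fun x => if x < p then x else x - 1 with hus
  refine ⟨us i, us j, us k, ?_, ?_, ?_, ?_⟩
  · simp only [hus]; split <;> split <;> omega
  · simp only [hus]; split <;> split <;> omega
  · simp only [hus]; split <;> omega
  · have e1 := ent_ins_ne (x := i) hp (by omega) hi
    have e2 := ent_ins_ne (x := j) hp (by omega) hj
    have e3 := ent_ins_ne (x := j+1) hp (by omega) hj1
    have e4 := ent_ins_ne (x := k) hp (by omega) hk
    have husj : us j + 1 = us (j + 1) := by simp only [hus]; split <;> split <;> omega
    rw [husj]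
    rw [e1, e2, e3, e4] at hpat
    exact hpat

end insertion

section cases
variable {l : List ℕ} {p : ℕ} {R : ℕ → ℕ → ℕ → ℕ → Prop}

/-- case analysis for insertion: maximal slot `b` -/
theorem occG_ins_cases_b (hv : ∀ a ∈ l, a < l.length) (hp : p ≤ l.length)
    (hRb : ∀ a b c d, R a b c d → a < b ∧ c < b ∧ d < b)
    (h : OccG R (ins l p)) :
    OccG R l ∨ ∃ i k, i < p ∧ p + 1 ≤ k ∧ k < l.length ∧
      R (ent l i) l.length (ent l p) (ent l k) := by
  obtain ⟨i, j, k, hij, hjk, hkl, hpat⟩ := h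
  rw [length_ins hp] at hkl
  by_cases hi : i = p
  · subst hi
    have h1 : ent (ins l i) j < l.length := ent_ins_lt_max hv hp (by omega) (by omega)
    rw [ent_ins_self hp] at hpat
    have := hRb _ _ _ _ hpat
    omega
  by_cases hj1 : j + 1 = p
  · subst hj1
    have h1 : ent (ins l (j+1)) j < l.length := ent_ins_lt_max hv hp (by omega) (by omega)
    rw [ent_ins_self hp] at hpat
    have := hRb _ _ _ _ hpat
    omega
  by_cases hk : k = p
  · subst hk
    have h1 : ent (ins l k) j < l.length := ent_ins_lt_max hv hp (by omega) (by omega)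
    rw [ent_ins_self hp] at hpat
    have := hRb _ _ _ _ hpat
    omega
  by_cases hj : j = p
  · subst hj
    right
    have hplen : j + 1 ≤ l.length := by omega
    have hjlen : j < l.length := by omega
    refine ⟨i, k - 1, hij, by omega, by omega, ?_⟩
    have e1 : ent (ins l j) i = ent l i := ent_ins_of_lt hij (by omega)
    have e2 : ent (ins l j) j = l.length := ent_ins_self (by omega)
    have e3 : ent (ins l j) (j + 1) = ent l j := ent_ins_of_ge le_rfl hjlen
    have e4 : ent (ins l j) k = ent l (k - 1) := by
      have := ent_ins_of_ge (l := l) (p := j) (k := k - 1) (by omega) (by omega)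
      rwa [Nat.sub_add_cancel (by omega : 1 ≤ k)] at this
    rw [e1, e2, e3, e4] at hpat
    exact hpat
  · left
    exact occG_of_occG_ins_avoid hp hij hjk (by omega) hi hj hj1 hk hpat

/-- case analysis for insertion: maximal slot `c` -/
theorem occG_ins_cases_c (hv : ∀ a ∈ l, a < l.length) (hp : p ≤ l.length)
    (hRc : ∀ a b c d, R a b c d → a < c ∧ b < c ∧ d < c)
    (h : OccG R (ins l p)) :
    OccG R l ∨ ∃ i k, i + 2 ≤ p ∧ p ≤ k ∧ k < l.length ∧
      R (ent l i) (ent l (p - 1)) l.length (ent l k) := by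
  obtain ⟨i, j, k, hij, hjk, hkl, hpat⟩ := h
  rw [length_ins hp] at hkl
  by_cases hi : i = p
  · subst hi
    have h1 : ent (ins l i) (j+1) < l.length := ent_ins_lt_max hv hp (by omega) (by omega)
    rw [ent_ins_self hp] at hpat
    have := hRc _ _ _ _ hpat
    omega
  by_cases hj : j = p
  · subst hj
    have h1 : ent (ins l j) (j+1) < l.length := ent_ins_lt_max hv hp (by omega) (by omega)
    rw [ent_ins_self hp] at hpat
    have := hRc _ _ _ _ hpat
    omega
  by_cases hk : k = p
  · subst hk
    have h1 : ent (ins l k) (j+1) < l.length := ent_ins_lt_max hv hp (by omega) (by omega)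
    rw [ent_ins_self hp] at hpat
    have := hRc _ _ _ _ hpat
    omega
  by_cases hj1 : j + 1 = p
  · right
    subst hj1
    have hjlen : j < l.length := by omega
    refine ⟨i, k - 1, by omega, by omega, by omega, ?_⟩
    have e1 : ent (ins l (j+1)) i = ent l i := ent_ins_of_lt (by omega) (by omega)
    have e2 : ent (ins l (j+1)) j = ent l j := ent_ins_of_lt (by omega) hjlen
    have e3 : ent (ins l (j+1)) (j+1) = l.length := ent_ins_self hp
    have e4 : ent (ins l (j+1)) k = ent l (k - 1) := by
      have := ent_ins_of_ge (l := l) (p := j + 1) (k := k - 1) (by omega) (by omega)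
      rwa [Nat.sub_add_cancel (by omega : 1 ≤ k)] at this
    rw [e1, e2, e3, e4] at hpat
    have : j + 1 - 1 = j := by omega
    rw [this]
    exact hpat
  · left
    exact occG_of_occG_ins_avoid hp hij hjk (by omega) hi hj hj1 hk hpat

end cases

section chars
def R2413 (a b c d : ℕ) : Prop := c < a ∧ a < d ∧ d < b
def R3142 (a b c d : ℕ) : Prop := b < d ∧ d < a ∧ a < c
def R3412 (a b c d : ℕ) : Prop := c < d ∧ d < a ∧ a < b

theorem occ2413_iff {l : List ℕ} : Occ2413 l ↔ OccG R2413 l := Iff.rfl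
theorem occ3142_iff {l : List ℕ} : Occ3142 l ↔ OccG R3142 l := Iff.rfl
theorem occ3412_iff {l : List ℕ} : Occ3412 l ↔ OccG R3412 l := Iff.rfl

def condA (l : List ℕ) (p : ℕ) : Prop :=
  ∃ i k, i < p ∧ p + 1 ≤ k ∧ k < l.length ∧ ent l p < ent l i ∧ ent l i < ent l k
def condC (l : List ℕ) (p : ℕ) : Prop :=
  ∃ i k, i + 2 ≤ p ∧ p ≤ k ∧ k < l.length ∧ ent l (p-1) < ent l k ∧ ent l k < ent l i
def condD (l : List ℕ) (p : ℕ) : Prop :=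
  ∃ i k, i < p ∧ p + 1 ≤ k ∧ k < l.length ∧ ent l p < ent l k ∧ ent l k < ent l i

variable {l : List ℕ} {p : ℕ}

theorem occ2413_ins_of_condA (hv : ∀ a ∈ l, a < l.length) (hp : p ≤ l.length)
    (h : condA l p) : Occ2413 (ins l p) := by
  obtain ⟨i, k, hip, hpk, hkl, h1, h2⟩ := h
  have hplen : p < l.length := by omega
  refine ⟨i, p, k + 1, hip, by omega, by rw [length_ins hp]; omega, ?_, ?_, ?_⟩
  · rw [ent_ins_of_ge le_rfl hplen, ent_ins_of_lt hip (by omega)]; exact h1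
  · rw [ent_ins_of_lt hip (by omega), ent_ins_of_ge (by omega) hkl]; exact h2
  · rw [ent_ins_of_ge (by omega) hkl, ent_ins_self hp]
    exact hv _ (ent_mem l hkl)

theorem occ3142_ins_of_condC (hv : ∀ a ∈ l, a < l.length) (hp : p ≤ l.length)
    (h : condC l p) : Occ3142 (ins l p) := by
  obtain ⟨i, k, hip, hpk, hkl, h1, h2⟩ := h
  have hp1 : p - 1 + 1 = p := by omega
  refine ⟨i, p - 1, k + 1, by omega, by omega, by rw [length_ins hp]; omega, ?_, ?_, ?_⟩
  · rw [ent_ins_of_lt (by omega) (by omega), ent_ins_of_ge (by omega) hkl]; exact h1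
  · rw [ent_ins_of_ge (by omega) hkl, ent_ins_of_lt (by omega) (by omega)]; exact h2
  · rw [hp1, ent_ins_self hp, ent_ins_of_lt (by omega) (by omega)]
    exact hv _ (ent_mem l (by omega))

theorem occ3412_ins_of_condD (hv : ∀ a ∈ l, a < l.length) (hp : p ≤ l.length)
    (h : condD l p) : Occ3412 (ins l p) := by
  obtain ⟨i, k, hip, hpk, hkl, h1, h2⟩ := h
  have hplen : p < l.length := by omega
  refine ⟨i, p, k + 1, hip, by omega, by rw [length_ins hp]; omega, ?_, ?_, ?_⟩
  · rw [ent_ins_of_ge le_rfl hplen, ent_ins_of_ge (by omega) hkl]; exact h1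
  · rw [ent_ins_of_ge (by omega) hkl, ent_ins_of_lt hip (by omega)]; exact h2
  · rw [ent_ins_of_lt hip (by omega), ent_ins_self hp]
    exact hv _ (ent_mem l (by omega))

theorem bax_ins_iff (hv : ∀ a ∈ l, a < l.length) (hp : p ≤ l.length) (hB : Bax l) :
    Bax (ins l p) ↔ ¬ condA l p ∧ ¬ condC l p := by
  constructor
  · intro hBi
    constructor
    · intro h; exact hBi.1 (occ2413_ins_of_condA hv hp h)
    · intro h; exact hBi.2 (occ3142_ins_of_condC hv hp h)
  · rintro ⟨hA, hC⟩
    constructor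
    · intro h
      rcases occG_ins_cases_b hv hp (fun a b c d hr => by
          obtain ⟨h1, h2, h3⟩ := hr; exact ⟨by omega, by omega, by omega⟩)
        (occ2413_iff.mp h) with h' | ⟨i, k, h1, h2, h3, h4⟩
      · exact hB.1 (occ2413_iff.mpr h')
      · exact hA ⟨i, k, h1, h2, h3, h4.1, h4.2.1⟩
    · intro h
      rcases occG_ins_cases_c hv hp (fun a b c d hr => by
          obtain ⟨h1, h2, h3⟩ := hr; exact ⟨by omega, by omega, by omega⟩)
        (occ3142_iff.mp h) with h' | ⟨i, k, h1, h2, h3, h4⟩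
      · exact hB.2 (occ3142_iff.mpr h')
      · exact hC ⟨i, k, h1, h2, h3, h4.1, h4.2.1⟩

theorem twi_ins_iff (hv : ∀ a ∈ l, a < l.length) (hp : p ≤ l.length) (hT : Twi l) :
    Twi (ins l p) ↔ ¬ condA l p ∧ ¬ condD l p := by
  constructor
  · intro hTi
    constructor
    · intro h; exact hTi.1 (occ2413_ins_of_condA hv hp h)
    · intro h; exact hTi.2 (occ3412_ins_of_condD hv hp h)
  · rintro ⟨hA, hD⟩
    constructor
    · intro h
      rcases occG_ins_cases_b hv hp (fun a b c d hr => by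
          obtain ⟨h1, h2, h3⟩ := hr; exact ⟨by omega, by omega, by omega⟩)
        (occ2413_iff.mp h) with h' | ⟨i, k, h1, h2, h3, h4⟩
      · exact hT.1 (occ2413_iff.mpr h')
      · exact hA ⟨i, k, h1, h2, h3, h4.1, h4.2.1⟩
    · intro h
      rcases occG_ins_cases_b hv hp (fun a b c d hr => by
          obtain ⟨h1, h2, h3⟩ := hr; exact ⟨by omega, by omega, by omega⟩)
        (occ3412_iff.mp h) with h' | ⟨i, k, h1, h2, h3, h4⟩
      · exact hT.2 (occ3412_iff.mpr h')
      · exact hD ⟨i, k, h1, h2, h3, h4.1, h4.2.1⟩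

end chars

section gaps
def gapB (l : List ℕ) : Finset ℕ := lrSet l ∪ (rlSet l).image (· + 1)
def gapT (l : List ℕ) : Finset ℕ := lrSet l ∪ rlSet l ∪ {l.length}

variable {l : List ℕ} {p : ℕ}

theorem not_condA_of_lr (hpl : p ∈ lrSet l) : ¬ condA l p := by
  rintro ⟨i, k, hip, hpk, hkl, h1, h2⟩
  exact absurd ((mem_lrSet.mp hpl).2 i hip) (by omega)

theorem gapB_iff (hl : l.Nodup) (hne : l ≠ []) (hB : Bax l) (hp : p ≤ l.length) :
    p ∈ gapB l ↔ ¬ condA l p ∧ ¬ condC l p := by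
  constructor
  · intro hmem
    rcases Finset.mem_union.mp hmem with hpl | hpr
    · -- p is a left-to-right maximum position
      obtain ⟨hplen, hlr⟩ := mem_lrSet.mp hpl
      refine ⟨not_condA_of_lr hpl, ?_⟩
      rintro ⟨i, k, hip, hpk, hkl, h1, h2⟩
      have hi : ent l i < ent l p := hlr i (by omega)
      rcases eq_or_lt_of_le hpk with rfl | hpk'
      · omega
      · apply hB.2
        have hp1 : p - 1 + 1 = p := by omega
        exact ⟨i, p - 1, k, by omega, by omega, hkl, h1, h2, by rw [hp1]; omega⟩
    · -- p = r + 1 for a right-to-left maximum position r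
      obtain ⟨r, hr, rfl⟩ := Finset.mem_image.mp hpr
      obtain ⟨hrlen, hrl⟩ := mem_rlSet.mp hr
      constructor
      · rintro ⟨i, k, hip, hpk, hkl, h1, h2⟩
        have hk : ent l k < ent l r := hrl k hkl (by omega)
        rcases eq_or_lt_of_le (by omega : i ≤ r) with rfl | hir
        · omega
        · exact hB.1 ⟨i, r, k, hir, by omega, hkl, by omega, h2, hk⟩
      · rintro ⟨i, k, hip, hpk, hkl, h1, h2⟩
        have : r + 1 - 1 = r := by omega
        rw [this] at h1
        have hk : ent l k < ent l r := hrl k hkl (by omega)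
        omega
  · rintro ⟨hA, hC⟩
    rcases Nat.eq_zero_or_pos p with rfl | hp0
    · exact Finset.mem_union_left _ (zero_mem_lrSet hne)
    rcases eq_or_lt_of_le hp with rfl | hplen
    · refine Finset.mem_union_right _ (Finset.mem_image.mpr ⟨l.length - 1, last_mem_rlSet hne, by omega⟩)
    by_contra hmem
    have hnl : p ∉ lrSet l := fun h => hmem (Finset.mem_union_left _ h)
    have hnr : p - 1 ∉ rlSet l := fun h =>
      hmem (Finset.mem_union_right _ (Finset.mem_image.mpr ⟨p - 1, h, by omega⟩))
    -- get a bigger earlier entry and a bigger later-or-equal entry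
    rw [mem_lrSet] at hnl
    push_neg at hnl
    obtain ⟨i0, hi0p, hi0⟩ := hnl hplen
    have hne2 : ent l p ≠ ent l i0 := ent_ne hl (j := i0) hplen (by omega) (by omega)
    have hi0' : ent l p < ent l i0 := by omega
    rw [mem_rlSet] at hnr
    push_neg at hnr
    obtain ⟨k0, hk0l, hk0p, hk0⟩ := hnr (by omega)
    have hne3 : ent l (p-1) ≠ ent l k0 := ent_ne hl (j := k0) (by omega) hk0l (by omega)
    have hk0' : ent l (p-1) < ent l k0 := by omega
    -- maxima
    obtain ⟨i1, hi1, hi1max⟩ := Finset.exists_max_image (Finset.range p) (ent l)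
      ⟨i0, Finset.mem_range.mpr hi0p⟩
    obtain ⟨k1, hk1, hk1max⟩ := Finset.exists_max_image (Finset.Ico p l.length) (ent l)
      ⟨k0, Finset.mem_Ico.mpr ⟨by omega, hk0l⟩⟩
    rw [Finset.mem_range] at hi1
    rw [Finset.mem_Ico] at hk1
    have hi1big : ent l p < ent l i1 := lt_of_lt_of_le hi0' (hi1max i0 (Finset.mem_range.mpr hi0p))
    have hk1big : ent l (p-1) < ent l k1 :=
      lt_of_lt_of_le hk0' (hk1max k0 (Finset.mem_Ico.mpr ⟨by omega, hk0l⟩))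
    have hne1 : ent l i1 ≠ ent l k1 := ent_ne hl (by omega) (by omega) (by omega)
    rcases lt_or_gt_of_ne hne1 with h | h
    · -- condA
      have hk1p : k1 ≠ p := by
        rintro rfl; omega
      exact hA ⟨i1, k1, hi1, by omega, hk1.2, hi1big, h⟩
    · -- condC
      have hi1p : i1 ≠ p - 1 := by
        rintro rfl
        have : ent l (p-1) < ent l k1 := hk1big
        omega
      exact hC ⟨i1, k1, by omega, hk1.1, hk1.2, hk1big, h⟩

theorem gapT_iff (hl : l.Nodup) (hp : p ≤ l.length) :
    p ∈ gapT l ↔ ¬ condA l p ∧ ¬ condD l p := by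
  constructor
  · intro hmem
    rcases Finset.mem_union.mp hmem with hpl | hpn
    · rcases Finset.mem_union.mp hpl with hplr | hprl
      · obtain ⟨hplen, hlr⟩ := mem_lrSet.mp hplr
        refine ⟨not_condA_of_lr hplr, ?_⟩
        rintro ⟨i, k, hip, hpk, hkl, h1, h2⟩
        have := hlr i hip
        omega
      · obtain ⟨hplen, hrl⟩ := mem_rlSet.mp hprl
        constructor
        · rintro ⟨i, k, hip, hpk, hkl, h1, h2⟩
          have := hrl k hkl (by omega)
          omega
        · rintro ⟨i, k, hip, hpk, hkl, h1, h2⟩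
          have := hrl k hkl (by omega)
          omega
    · have : p = l.length := by simpa using hpn
      subst this
      constructor
      · rintro ⟨i, k, hip, hpk, hkl, h1, h2⟩; omega
      · rintro ⟨i, k, hip, hpk, hkl, h1, h2⟩; omega
  · rintro ⟨hA, hD⟩
    rcases eq_or_lt_of_le hp with rfl | hplen
    · exact Finset.mem_union_right _ (by simp)
    by_contra hmem
    have hnl : p ∉ lrSet l := fun h =>
      hmem (Finset.mem_union_left _ (Finset.mem_union_left _ h))
    have hnr : p ∉ rlSet l := fun h =>
      hmem (Finset.mem_union_left _ (Finset.mem_union_right _ h))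
    rw [mem_lrSet] at hnl
    push_neg at hnl
    obtain ⟨i0, hi0p, hi0⟩ := hnl hplen
    have hne2 : ent l p ≠ ent l i0 := ent_ne hl (j := i0) hplen (by omega) (by omega)
    have hi0' : ent l p < ent l i0 := by omega
    rw [mem_rlSet] at hnr
    push_neg at hnr
    obtain ⟨k0, hk0l, hk0p, hk0⟩ := hnr hplen
    have hne3 : ent l p ≠ ent l k0 := ent_ne hl (j := k0) hplen hk0l (by omega)
    have hk0' : ent l p < ent l k0 := by omega
    have hne1 : ent l i0 ≠ ent l k0 := ent_ne hl (by omega) (by omega) (by omega)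
    rcases lt_or_gt_of_ne hne1 with h | h
    · exact hA ⟨i0, k0, hi0p, by omega, hk0l, hi0', h⟩
    · exact hD ⟨i0, k0, hi0p, by omega, hk0l, hk0', h⟩

end gaps

section stats
variable {l : List ℕ} {p : ℕ}

theorem ent_default {l : List ℕ} {i : ℕ} (h : l.length ≤ i) : ent l i = 0 :=
  List.getD_eq_default l 0 (by omega)

theorem lrSet_ins (hv : ∀ a ∈ l, a < l.length) (hp : p ≤ l.length) :
    lrSet (ins l p) = ((lrSet l).filter (· < p)) ∪ {p} := by
  ext x
  simp only [Finset.mem_union, Finset.mem_filter, Finset.mem_singleton, mem_lrSet,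
    length_ins hp]
  constructor
  · rintro ⟨hxlen, hlr⟩
    rcases lt_trichotomy x p with hx | hx | hx
    · left
      refine ⟨⟨by omega, fun i hi => ?_⟩, hx⟩
      have := hlr i hi
      rwa [ent_ins_of_lt (l := l) (p := p) (by omega : i < p) (by omega),
        ent_ins_of_lt (l := l) (p := p) hx (by omega)] at this
    · right; exact hx
    · exfalso
      have h1 := hlr p hx
      rw [ent_ins_self hp] at h1
      have hx1 : x - 1 < l.length := by omega
      have h2 : ent (ins l p) x = ent l (x - 1) := by
        have := ent_ins_of_ge (l := l) (p := p) (k := x - 1) (by omega) hx1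
        rwa [Nat.sub_add_cancel (by omega : 1 ≤ x)] at this
      have h3 := hv _ (ent_mem l hx1)
      omega
  · rintro (⟨⟨hxlen, hlr⟩, hxp⟩ | rfl)
    · refine ⟨by omega, fun i hi => ?_⟩
      rw [ent_ins_of_lt (l := l) (p := p) (by omega : i < p) (by omega),
        ent_ins_of_lt (l := l) (p := p) hxp (by omega)]
      exact hlr i hi
    · refine ⟨by omega, fun i hi => ?_⟩
      rw [ent_ins_self hp, ent_ins_of_lt hi (by omega)]
      exact hv _ (ent_mem l (by omega))

theorem rlSet_ins (hv : ∀ a ∈ l, a < l.length) (hp : p ≤ l.length) :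
    rlSet (ins l p) = {p} ∪ ((rlSet l).filter (p ≤ ·)).image (· + 1) := by
  ext x
  simp only [Finset.mem_union, Finset.mem_filter, Finset.mem_singleton, mem_rlSet,
    Finset.mem_image, length_ins hp]
  constructor
  · rintro ⟨hxlen, hrl⟩
    rcases lt_trichotomy x p with hx | hx | hx
    · exfalso
      have h1 := hrl p (by omega) hx
      rw [ent_ins_self hp, ent_ins_of_lt hx (by omega)] at h1
      have := hv _ (ent_mem l (show x < l.length by omega))
      omega
    · left; exact hx
    · right
      have hx1 : x - 1 + 1 = x := by omega
      have ex : ent (ins l p) x = ent l (x - 1) := by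
        have := ent_ins_of_ge (l := l) (p := p) (k := x - 1) (by omega) (by omega)
        rwa [Nat.sub_add_cancel (by omega : 1 ≤ x)] at this
      refine ⟨x - 1, ⟨⟨by omega, fun k hk hpk => ?_⟩, by omega⟩, hx1⟩
      have := hrl (k + 1) (by omega) (by omega)
      rwa [ent_ins_of_ge (by omega) hk, ex] at this
  · rintro (rfl | ⟨y, ⟨⟨hylen, hrl⟩, hpy⟩, rfl⟩)
    · refine ⟨by omega, fun k hk hpk => ?_⟩
      rw [ent_ins_self hp]
      have hk1 : k - 1 < l.length := by omega
      have ek : ent (ins l x) k = ent l (k - 1) := by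
        have := ent_ins_of_ge (l := l) (p := x) (k := k - 1) (by omega) hk1
        rwa [Nat.sub_add_cancel (by omega : 1 ≤ k)] at this
      rw [ek]
      exact hv _ (ent_mem l hk1)
    · refine ⟨by omega, fun k hk hyk => ?_⟩
      have hk1 : k - 1 < l.length := by omega
      have ek : ent (ins l p) k = ent l (k - 1) := by
        have := ent_ins_of_ge (l := l) (p := p) (k := k - 1) (by omega) hk1
        rwa [Nat.sub_add_cancel (by omega : 1 ≤ k)] at this
      rw [ek, ent_ins_of_ge hpy hylen]
      exact hrl (k - 1) hk1 (by omega)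

/-- the label of the child obtained by inserting the new maximum at gap `p`. -/
def stat (l : List ℕ) (p : ℕ) : ℕ × ℕ :=
  (rk (lrSet l) p + 1, ((rlSet l).filter (p ≤ ·)).card + 1)

theorem label_ins (hv : ∀ a ∈ l, a < l.length) (hp : p ≤ l.length) :
    ((lrSet (ins l p)).card, (rlSet (ins l p)).card) = stat l p := by
  rw [lrSet_ins hv hp, rlSet_ins hv hp, stat]
  congr 1
  · rw [Finset.card_union_of_disjoint (by simp), Finset.card_singleton, rk]
  · rw [Finset.card_union_of_disjoint, Finset.card_image_of_injective _ (add_left_injective 1),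
      Finset.card_singleton, Nat.add_comm]
    simp only [Finset.disjoint_singleton_left, Finset.mem_image, Finset.mem_filter]
    rintro ⟨y, ⟨_, hy⟩, hy1⟩
    omega

end stats

section labels
variable {l : List ℕ} {g y : ℕ}

def labelSet (p q : ℕ) : Finset (ℕ × ℕ) :=
  ((Finset.range p).image fun x => (x + 1, q + 1)) ∪
    ((Finset.range q).image fun y => (p + 1, y + 1))

theorem card_filter_stat {s : Finset ℕ} {f : ℕ → ℕ × ℕ} (hf : Set.InjOn f s)
    (lab : ℕ × ℕ) :
    (s.filter (fun g => f g = lab)).card = if lab ∈ s.image f then 1 else 0 := by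
  split_ifs with h
  · obtain ⟨g, hg, rfl⟩ := Finset.mem_image.mp h
    rw [Finset.card_eq_one]
    refine ⟨g, ?_⟩
    ext z
    simp only [Finset.mem_filter, Finset.mem_singleton]
    constructor
    · rintro ⟨hz, hfz⟩; exact hf (by simpa using hz) (by simpa using hg) hfz
    · rintro rfl; exact ⟨hg, rfl⟩
  · rw [Finset.card_eq_zero]
    ext z
    simp only [Finset.mem_filter, Finset.notMem_empty, iff_false, not_and]
    intro hz hfz
    exact h (Finset.mem_image.mpr ⟨z, hz, hfz⟩)

theorem stat_of_lr (hg : g ∈ lrSet l) :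
    stat l g = (rk (lrSet l) g + 1, (rlSet l).card + 1) := by
  rw [stat]
  congr 2
  rw [Finset.filter_true_of_mem (fun y hy => lr_le_rl hg hy)]

theorem rk_lr_of_rl_succ (hy : y ∈ rlSet l) : rk (lrSet l) (y + 1) = (lrSet l).card := by
  rw [rk, Finset.filter_true_of_mem]
  intro x hx
  have := lr_le_rl hx hy
  omega

theorem rk_rl_succ (hy : y ∈ rlSet l) :
    rk (rlSet l) (y + 1) = rk (rlSet l) y + 1 := by
  rw [rk, rk]
  have : (rlSet l).filter (· < y + 1) = (rlSet l).filter (· < y) ∪ {y} := by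
    ext z
    simp only [Finset.mem_union, Finset.mem_filter, Finset.mem_singleton]
    constructor
    · rintro ⟨hz, hzy⟩
      rcases eq_or_lt_of_le (by omega : z ≤ y) with rfl | h
      · right; rfl
      · left; exact ⟨hz, h⟩
    · rintro (⟨hz, hzy⟩ | rfl)
      · exact ⟨hz, by omega⟩
      · exact ⟨hy, by omega⟩
  rw [this, Finset.card_union_of_disjoint (by simp), Finset.card_singleton]

theorem stat_of_rl_succ (hy : y ∈ rlSet l) :
    stat l (y + 1) =
      ((lrSet l).card + 1, ((rlSet l).card - 1 - rk (rlSet l) y) + 1) := by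
  have h1 := rk_lr_of_rl_succ hy
  have h2 := card_filter_ge (rlSet l) (y + 1)
  have h3 := rk_rl_succ hy
  rw [stat, h1, Prod.mk.injEq]
  refine ⟨rfl, ?_⟩
  rw [h2, h3]
  have := rk_lt_card hy
  omega

theorem gapB_statSpec (hl : l.Nodup) (hne : l ≠ []) :
    Set.InjOn (stat l) (gapB l) ∧
      (gapB l).image (stat l) = labelSet (lrSet l).card (rlSet l).card := by
  set P := (lrSet l).card with hP
  set Q := (rlSet l).card with hQ
  have key : ∀ g ∈ gapB l,
      (g ∈ lrSet l ∧ stat l g = (rk (lrSet l) g + 1, Q + 1) ∧ rk (lrSet l) g < P) ∨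
      (∃ y ∈ rlSet l, g = y + 1 ∧ stat l g = (P + 1, (Q - 1 - rk (rlSet l) y) + 1) ∧
        rk (rlSet l) y < Q) := by
    intro g hg
    rcases Finset.mem_union.mp hg with h | h
    · exact Or.inl ⟨h, stat_of_lr h, rk_lt_card h⟩
    · obtain ⟨y, hy, rfl⟩ := Finset.mem_image.mp h
      exact Or.inr ⟨y, hy, rfl, stat_of_rl_succ hy, rk_lt_card hy⟩
  constructor
  · intro g hg h hh he
    simp only [Finset.coe_union, Set.mem_union, Finset.mem_coe] at hg hh
    rcases key g (by simpa [gapB] using hg) with ⟨hg1, hg2, hg3⟩ | ⟨y, hy, rfl, hg2, hg3⟩ <;>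
      rcases key h (by simpa [gapB] using hh) with ⟨hh1, hh2, hh3⟩ | ⟨z, hz, rfl, hh2, hh3⟩
    · rw [hg2, hh2] at he
      have h1 := congrArg Prod.fst he
      simp only at h1
      exact rk_injOn hg1 hh1 (by omega)
    · rw [hg2, hh2] at he
      have := congrArg Prod.fst he
      simp at this
      omega
    · rw [hg2, hh2] at he
      have := congrArg Prod.fst he
      simp at this
      omega
    · rw [hg2, hh2] at he
      have h1 := congrArg Prod.snd he
      simp only at h1
      have : rk (rlSet l) y = rk (rlSet l) z := by omega
      have := rk_injOn hy hz this
      omega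
  · ext lab
    simp only [labelSet, Finset.mem_union, Finset.mem_image]
    constructor
    · rintro ⟨g, hg, rfl⟩
      rcases key g hg with ⟨hg1, hg2, hg3⟩ | ⟨y, hy, rfl, hg2, hg3⟩
      · exact Or.inl ⟨rk (lrSet l) g, Finset.mem_range.mpr hg3, hg2.symm⟩
      · refine Or.inr ⟨Q - 1 - rk (rlSet l) y, Finset.mem_range.mpr (by omega), hg2.symm⟩
    · rintro (⟨x, hx, rfl⟩ | ⟨y, hy, rfl⟩)
      · rw [Finset.mem_range] at hx
        obtain ⟨g, hg, hrk⟩ := rk_surj (lrSet l) x (by omega)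
        refine ⟨g, Finset.mem_union_left _ hg, ?_⟩
        rw [stat_of_lr hg, hrk]
      · rw [Finset.mem_range] at hy
        obtain ⟨y0, hy0, hrk⟩ := rk_surj (rlSet l) (Q - 1 - y) (by omega)
        refine ⟨y0 + 1, Finset.mem_union_right _ (Finset.mem_image.mpr ⟨y0, hy0, rfl⟩), ?_⟩
        rw [stat_of_rl_succ hy0, hrk]
        have : Q - 1 - (Q - 1 - y) = y := by omega
        rw [this]

end labels

section labelsT
variable {l : List ℕ} {g y : ℕ}

theorem stat_of_rl_not_lr (hl : l.Nodup) (hne : l ≠ []) (hg : g ∈ rlSet l)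
    (hgl : g ∉ lrSet l) :
    stat l g = ((lrSet l).card + 1, ((rlSet l).card - rk (rlSet l) g) + 1) ∧
      1 ≤ rk (rlSet l) g ∧ rk (rlSet l) g < (rlSet l).card := by
  have hrk1 : 1 ≤ rk (rlSet l) g := by
    set mn := (rlSet l).min' (rlSet_nonempty hne) with hmn
    have hmnm : mn ∈ rlSet l := (rlSet l).min'_mem _
    have hmnlr : mn ∈ lrSet l := min_rlSet_mem_lrSet hl hmnm (fun y hy => (rlSet l).min'_le y hy)
    have hne2 : mn ≠ g := fun h => hgl (h ▸ hmnlr)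
    have : mn ∈ (rlSet l).filter (· < g) := by
      simp only [Finset.mem_filter]
      exact ⟨hmnm, lt_of_le_of_ne ((rlSet l).min'_le g hg) hne2⟩
    rw [rk]
    exact Finset.card_pos.mpr ⟨mn, this⟩
  refine ⟨?_, hrk1, rk_lt_card hg⟩
  rw [stat, Prod.mk.injEq]
  constructor
  · rw [rk, Finset.filter_true_of_mem]
    intro x hx
    exact lt_of_le_of_ne (lr_le_rl hx hg) (fun h => hgl (h ▸ hx))
  · rw [card_filter_ge]

theorem stat_of_len (hne : l ≠ []) :
    stat l l.length = ((lrSet l).card + 1, 1) := by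
  rw [stat, Prod.mk.injEq]
  constructor
  · rw [rk, Finset.filter_true_of_mem]
    intro x hx
    exact (mem_lrSet.mp hx).1
  · rw [Finset.filter_false_of_mem, Finset.card_empty]
    intro x hx
    have := (mem_rlSet.mp hx).1
    omega

theorem len_not_mem_lr {l : List ℕ} : l.length ∉ lrSet l := by
  intro h; have := (mem_lrSet.mp h).1; omega

theorem len_not_mem_rl {l : List ℕ} : l.length ∉ rlSet l := by
  intro h; have := (mem_rlSet.mp h).1; omega

theorem gapT_statSpec (hl : l.Nodup) (hne : l ≠ []) :
    Set.InjOn (stat l) (gapT l) ∧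
      (gapT l).image (stat l) = labelSet (lrSet l).card (rlSet l).card := by
  set P := (lrSet l).card with hP
  set Q := (rlSet l).card with hQ
  have key : ∀ g ∈ gapT l,
      (g ∈ lrSet l ∧ stat l g = (rk (lrSet l) g + 1, Q + 1) ∧ rk (lrSet l) g < P) ∨
      (g ∈ rlSet l ∧ g ∉ lrSet l ∧ stat l g = (P + 1, (Q - rk (rlSet l) g) + 1) ∧
        1 ≤ rk (rlSet l) g ∧ rk (rlSet l) g < Q) ∨
      (g = l.length ∧ stat l g = (P + 1, 1)) := by
    intro g hg
    by_cases hglr : g ∈ lrSet l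
    · exact Or.inl ⟨hglr, stat_of_lr hglr, rk_lt_card hglr⟩
    rcases Finset.mem_union.mp hg with h | h
    · rcases Finset.mem_union.mp h with h' | h'
      · exact absurd h' hglr
      · obtain ⟨h1, h2, h3⟩ := stat_of_rl_not_lr hl hne h' hglr
        exact Or.inr (Or.inl ⟨h', hglr, h1, h2, h3⟩)
    · have : g = l.length := by simpa using h
      subst this
      exact Or.inr (Or.inr ⟨rfl, stat_of_len hne⟩)
  constructor
  · intro g hg h hh he
    rcases key g (by simpa using hg) with ⟨hg1, hg2, hg3⟩ | ⟨hg1, hg1', hg2, hg3, hg4⟩ | ⟨rfl, hg2⟩ <;>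
      rcases key h (by simpa using hh) with ⟨hh1, hh2, hh3⟩ | ⟨hh1, hh1', hh2, hh3, hh4⟩ | ⟨heq, hh2⟩
    all_goals rw [hg2, hh2] at he
    · have h1 := congrArg Prod.fst he
      simp only at h1
      exact rk_injOn hg1 hh1 (by omega)
    · have h1 := congrArg Prod.fst he
      simp only at h1
      omega
    · have h1 := congrArg Prod.fst he
      simp only at h1
      omega
    · have h1 := congrArg Prod.fst he
      simp only at h1
      omega
    · have h1 := congrArg Prod.snd he
      simp only at h1
      have : rk (rlSet l) g = rk (rlSet l) h := by omega
      exact rk_injOn hg1 hh1 this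
    · have h1 := congrArg Prod.snd he
      simp only at h1
      omega
    · have h1 := congrArg Prod.fst he
      simp only at h1
      omega
    · have h1 := congrArg Prod.snd he
      simp only at h1
      omega
    · rw [heq]
  · ext lab
    simp only [labelSet, Finset.mem_union, Finset.mem_image]
    constructor
    · rintro ⟨g, hg, rfl⟩
      rcases key g hg with ⟨hg1, hg2, hg3⟩ | ⟨hg1, hg1', hg2, hg3, hg4⟩ | ⟨rfl, hg2⟩
      · exact Or.inl ⟨rk (lrSet l) g, Finset.mem_range.mpr hg3, hg2.symm⟩
      · exact Or.inr ⟨Q - rk (rlSet l) g, Finset.mem_range.mpr (by omega), hg2.symm⟩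
      · refine Or.inr ⟨0, Finset.mem_range.mpr ?_, hg2.symm⟩
        rw [hQ]
        exact Finset.card_pos.mpr (rlSet_nonempty hne)
    · rintro (⟨x, hx, rfl⟩ | ⟨y, hy, rfl⟩)
      · rw [Finset.mem_range] at hx
        obtain ⟨g, hg, hrk⟩ := rk_surj (lrSet l) x (by omega)
        refine ⟨g, Finset.mem_union_left _ (Finset.mem_union_left _ hg), ?_⟩
        rw [stat_of_lr hg, hrk]
      · rw [Finset.mem_range] at hy
        rcases Nat.eq_zero_or_pos y with rfl | hy0
        · exact ⟨l.length, Finset.mem_union_right _ (by simp), stat_of_len hne⟩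
        · obtain ⟨g, hg, hrk⟩ := rk_surj (rlSet l) (Q - y) (by omega)
          have hglr : g ∉ lrSet l := by
            intro hglr
            have : (rlSet l).filter (· < g) = ∅ := by
              rw [Finset.filter_false_of_mem]
              intro z hz
              have := lr_le_rl hglr hz
              omega
            rw [rk, this] at hrk
            simp at hrk
            omega
          obtain ⟨h1, _, _⟩ := stat_of_rl_not_lr hl hne hg hglr
          refine ⟨g, Finset.mem_union_left _ (Finset.mem_union_right _ hg), ?_⟩
          rw [h1, hrk]
          have : Q - (Q - y) = y := by omega
          rw [this]

end labelsT

section permsL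

theorem insertIdx_eraseIdx_self : ∀ (t : List ℕ) (p : ℕ) (h : p < t.length),
    (t.eraseIdx p).insertIdx p t[p] = t
  | a :: t, 0, _ => rfl
  | a :: t, p + 1, h => by
    simp only [List.eraseIdx, List.insertIdx_succ_cons, List.getElem_cons_succ]
    rw [insertIdx_eraseIdx_self t p (by simpa using h)]

def permsL (n : ℕ) : Finset (List ℕ) :=
  ⟨↑(List.range n).permutations, List.nodup_permutations _ (List.nodup_range (n := n))⟩

theorem mem_permsL {n : ℕ} {l : List ℕ} : l ∈ permsL n ↔ l ~ List.range n := by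
  simp [permsL, Finset.mem_def, Multiset.mem_coe, List.mem_permutations]

theorem permsL_length {n : ℕ} {l : List ℕ} (h : l ∈ permsL n) : l.length = n := by
  rw [(mem_permsL.mp h).length_eq, List.length_range]

theorem permsL_nodup {n : ℕ} {l : List ℕ} (h : l ∈ permsL n) : l.Nodup :=
  (mem_permsL.mp h).nodup_iff.mpr (List.nodup_range (n := n))

theorem permsL_hv {n : ℕ} {l : List ℕ} (h : l ∈ permsL n) : ∀ a ∈ l, a < l.length := by
  intro a ha
  rw [permsL_length h]
  have := (mem_permsL.mp h).mem_iff.mp ha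
  simpa using this

theorem range_succ_perm (n : ℕ) : List.range (n + 1) ~ n :: List.range n := by
  rw [List.range_succ (n := n)]
  exact List.perm_append_singleton n (List.range n)

theorem ins_mem_permsL {n : ℕ} {l : List ℕ} {p : ℕ} (h : l ∈ permsL n) (hp : p ≤ n) :
    ins l p ∈ permsL (n + 1) := by
  rw [mem_permsL]
  have h1 : ins l p ~ l.length :: l :=
    List.perm_insertIdx l.length l (by rw [permsL_length h]; exact hp)
  rw [permsL_length h] at h1
  exact h1.trans ((Perm.cons n (mem_permsL.mp h)).trans (range_succ_perm n).symm)

theorem exists_decomp {n : ℕ} {t : List ℕ} (ht : t ∈ permsL (n + 1)) :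
    ∃ l p, l ∈ permsL n ∧ p ≤ n ∧ ins l p = t := by
  have htn : n ∈ t := (mem_permsL.mp ht).mem_iff.mpr (by simp)
  obtain ⟨p, hplen, hpt⟩ := List.mem_iff_getElem.mp htn
  have htl : t.length = n + 1 := permsL_length ht
  set l := t.eraseIdx p with hldef
  have hlen : l.length = n := by
    rw [hldef]
    have := List.length_eraseIdx_add_one hplen
    omega
  have hins : ins l p = t := by
    rw [ins, hlen, ← hpt, hldef]
    exact insertIdx_eraseIdx_self t p hplen
  have hperm : l ∈ permsL n := by
    rw [mem_permsL]
    have hple : p ≤ l.length := by rw [hlen]; omega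
    have h1 : ins l p ~ l.length :: l :=
      List.perm_insertIdx l.length l hple
    rw [hins, hlen] at h1
    have h2 : (n :: l) ~ (n :: List.range n) :=
      (h1.symm.trans (mem_permsL.mp ht)).trans (range_succ_perm n)
    exact h2.cons_inv
  exact ⟨l, p, hperm, by omega, hins⟩

theorem ins_inj {n : ℕ} {l l' : List ℕ} {p p' : ℕ} (h : l ∈ permsL n) (h' : l' ∈ permsL n)
    (hp : p ≤ n) (hp' : p' ≤ n) (he : ins l p = ins l' p') : p = p' ∧ l = l' := by
  have hl := permsL_length h
  have hl' := permsL_length h'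
  have hpp : p = p' := by
    by_contra hne
    -- wlog via symmetric argument
    rcases lt_or_gt_of_ne hne with hlt | hlt
    · have e1 : ent (ins l p) p = l.length := ent_ins_self (by omega)
      have e2 : ent (ins l' p') p = ent l' p := ent_ins_of_lt hlt (by omega)
      rw [he, e2] at e1
      have hm : ent l' p ∈ l' := ent_mem l' (show p < l'.length by omega)
      have := permsL_hv h' _ hm
      omega
    · have e1 : ent (ins l' p') p' = l'.length := ent_ins_self (by omega)
      have e2 : ent (ins l p) p' = ent l p' := ent_ins_of_lt hlt (by omega)
      rw [← he, e2] at e1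
      have hm : ent l p' ∈ l := ent_mem l (show p' < l.length by omega)
      have := permsL_hv h _ hm
      omega
  subst hpp
  refine ⟨rfl, ?_⟩
  have : (ins l p).eraseIdx p = (ins l' p).eraseIdx p := by rw [he]
  rwa [ins, ins, List.eraseIdx_insertIdx_self, List.eraseIdx_insertIdx_self] at this

end permsL

section counting
variable (Cls : List ℕ → Prop) (gap : List ℕ → Finset ℕ)

def cnt (n : ℕ) (pq : ℕ × ℕ) : ℕ :=
  (((permsL n).filter Cls).filter
    (fun l => ((lrSet l).card, (rlSet l).card) = pq)).card

theorem cnt_rec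
    (hdel : ∀ l p, (∀ a ∈ l, a < l.length) → p ≤ l.length → Cls (ins l p) → Cls l)
    (hchar : ∀ l p, l.Nodup → l ≠ [] → (∀ a ∈ l, a < l.length) → Cls l →
      p ≤ l.length → (Cls (ins l p) ↔ p ∈ gap l))
    (hstat : ∀ l, l.Nodup → l ≠ [] → Set.InjOn (stat l) (gap l) ∧
      (gap l).image (stat l) = labelSet (lrSet l).card (rlSet l).card)
    (hgap : ∀ l p, p ∈ gap l → p ≤ l.length)
    (n : ℕ) (hn : 1 ≤ n) (lab : ℕ × ℕ) :
    cnt Cls (n + 1) lab = ∑ l ∈ (permsL n).filter Cls,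
      (if lab ∈ labelSet (lrSet l).card (rlSet l).card then 1 else 0) := by
  have hbase : ∀ l ∈ (permsL n).filter Cls,
      l.Nodup ∧ l ≠ [] ∧ (∀ a ∈ l, a < l.length) ∧ l.length = n ∧ Cls l := by
    intro l hl
    rw [Finset.mem_filter] at hl
    have h1 := permsL_length hl.1
    refine ⟨permsL_nodup hl.1, ?_, permsL_hv hl.1, h1, hl.2⟩
    intro h
    rw [h] at h1
    simp at h1
    omega
  -- rewrite RHS as a sum of cardinalities
  have hrhs : ∑ l ∈ (permsL n).filter Cls,
      (if lab ∈ labelSet (lrSet l).card (rlSet l).card then 1 else 0) =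
      ∑ l ∈ (permsL n).filter Cls,
        ((gap l).filter (fun p => stat l p = lab)).card := by
    refine Finset.sum_congr rfl (fun l hl => ?_)
    obtain ⟨hnd, hne, hv, hlen, hcls⟩ := hbase l hl
    obtain ⟨hinj, himg⟩ := hstat l hnd hne
    rw [card_filter_stat hinj lab, himg]
  rw [hrhs]
  -- identify the LHS set with a biUnion
  have hset : ((permsL (n+1)).filter
        (fun t => Cls t ∧ ((lrSet t).card, (rlSet t).card) = lab)) =
      ((permsL n).filter Cls).biUnion
        (fun l => ((gap l).filter (fun p => stat l p = lab)).image (ins l)) := by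
    ext t
    simp only [Finset.mem_biUnion, Finset.mem_filter, Finset.mem_image]
    constructor
    · rintro ⟨ht, hclst, hlabt⟩
      obtain ⟨l, p, hl, hp, hins⟩ := exists_decomp ht
      have hlen := permsL_length hl
      have hv := permsL_hv hl
      have hnd := permsL_nodup hl
      have hne : l ≠ [] := by
        intro h; rw [h] at hlen; simp at hlen; omega
      have hplen : p ≤ l.length := by omega
      have hclsl : Cls l := hdel l p hv hplen (hins ▸ hclst)
      have hpgap : p ∈ gap l := (hchar l p hnd hne hv hclsl hplen).mp (hins ▸ hclst)
      have hstatp : stat l p = lab := by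
        rw [← label_ins hv hplen, hins]
        exact hlabt
      exact ⟨l, ⟨hl, hclsl⟩, p, ⟨hpgap, hstatp⟩, hins⟩
    · rintro ⟨l, ⟨hl, hclsl⟩, p, ⟨hpgap, hstatp⟩, rfl⟩
      have hlen := permsL_length hl
      have hv := permsL_hv hl
      have hnd := permsL_nodup hl
      have hne : l ≠ [] := by
        intro h; rw [h] at hlen; simp at hlen; omega
      have hplen : p ≤ l.length := hgap l p hpgap
      refine ⟨ins_mem_permsL hl (by omega), ?_, ?_⟩
      · exact (hchar l p hnd hne hv hclsl hplen).mpr hpgap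
      · rw [label_ins hv hplen]
        exact hstatp
  have hdisj : ∀ l1 ∈ (permsL n).filter Cls, ∀ l2 ∈ (permsL n).filter Cls, l1 ≠ l2 →
      Disjoint (((gap l1).filter (fun p => stat l1 p = lab)).image (ins l1))
        (((gap l2).filter (fun p => stat l2 p = lab)).image (ins l2)) := by
    intro l1 hl1 l2 hl2 hne12
    rw [Finset.disjoint_left]
    rintro t ht1 ht2
    rw [Finset.mem_filter] at hl1 hl2
    obtain ⟨p1, hp1, he1⟩ := Finset.mem_image.mp ht1
    obtain ⟨p2, hp2, he2⟩ := Finset.mem_image.mp ht2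
    rw [Finset.mem_filter] at hp1 hp2
    have h1 : p1 ≤ n := by
      have := hgap l1 p1 hp1.1; rwa [permsL_length hl1.1] at this
    have h2 : p2 ≤ n := by
      have := hgap l2 p2 hp2.1; rwa [permsL_length hl2.1] at this
    exact hne12 (ins_inj hl1.1 hl2.1 h1 h2 (he1.trans he2.symm)).2
  have hcardimg : ∀ l ∈ (permsL n).filter Cls,
      (((gap l).filter (fun p => stat l p = lab)).image (ins l)).card =
        ((gap l).filter (fun p => stat l p = lab)).card := by
    intro l hl
    rw [Finset.mem_filter] at hl
    apply Finset.card_image_of_injOn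
    intro p1 hp1 p2 hp2 he
    rw [Finset.coe_filter, Set.mem_setOf_eq] at hp1 hp2
    have h1 : p1 ≤ n := by
      have := hgap l p1 hp1.1; rwa [permsL_length hl.1] at this
    have h2 : p2 ≤ n := by
      have := hgap l p2 hp2.1; rwa [permsL_length hl.1] at this
    exact (ins_inj hl.1 hl.1 h1 h2 he).1
  rw [cnt, Finset.filter_filter, hset, Finset.card_biUnion hdisj]
  exact Finset.sum_congr rfl hcardimg

end counting

section instantiate
variable {l : List ℕ} {p : ℕ}

theorem bax_del (l : List ℕ) (p : ℕ) (hv : ∀ a ∈ l, a < l.length) (hp : p ≤ l.length) :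
    Bax (ins l p) → Bax l := by
  intro h
  constructor
  · intro h2
    exact h.1 (occ2413_iff.mpr (occG_ins_of_occG_b hv hp
      (fun a b c d w hr hw => ⟨hr.1, hr.2.1, lt_of_lt_of_le hr.2.2 hw⟩) (occ2413_iff.mp h2)))
  · intro h2
    exact h.2 (occ3142_iff.mpr (occG_ins_of_occG_c hv hp
      (fun a b c d w hr hw => ⟨hr.1, hr.2.1, lt_of_lt_of_le hr.2.2 hw⟩) (occ3142_iff.mp h2)))

theorem twi_del (l : List ℕ) (p : ℕ) (hv : ∀ a ∈ l, a < l.length) (hp : p ≤ l.length) :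
    Twi (ins l p) → Twi l := by
  intro h
  constructor
  · intro h2
    exact h.1 (occ2413_iff.mpr (occG_ins_of_occG_b hv hp
      (fun a b c d w hr hw => ⟨hr.1, hr.2.1, lt_of_lt_of_le hr.2.2 hw⟩) (occ2413_iff.mp h2)))
  · intro h2
    exact h.2 (occ3412_iff.mpr (occG_ins_of_occG_b hv hp
      (fun a b c d w hr hw => ⟨hr.1, hr.2.1, lt_of_lt_of_le hr.2.2 hw⟩) (occ3412_iff.mp h2)))

theorem bax_char (l : List ℕ) (p : ℕ) (hnd : l.Nodup) (hne : l ≠ [])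
    (hv : ∀ a ∈ l, a < l.length) (hcls : Bax l) (hp : p ≤ l.length) :
    Bax (ins l p) ↔ p ∈ gapB l := by
  rw [bax_ins_iff hv hp hcls, gapB_iff hnd hne hcls hp]

theorem twi_char (l : List ℕ) (p : ℕ) (hnd : l.Nodup) (hne : l ≠ [])
    (hv : ∀ a ∈ l, a < l.length) (hcls : Twi l) (hp : p ≤ l.length) :
    Twi (ins l p) ↔ p ∈ gapT l := by
  rw [twi_ins_iff hv hp hcls, gapT_iff hnd hp]

theorem gapB_le (l : List ℕ) (p : ℕ) (h : p ∈ gapB l) : p ≤ l.length := by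
  rcases Finset.mem_union.mp h with h | h
  · have := (mem_lrSet.mp h).1; omega
  · obtain ⟨y, hy, rfl⟩ := Finset.mem_image.mp h
    have := (mem_rlSet.mp hy).1; omega

theorem gapT_le (l : List ℕ) (p : ℕ) (h : p ∈ gapT l) : p ≤ l.length := by
  rcases Finset.mem_union.mp h with h | h
  · rcases Finset.mem_union.mp h with h | h
    · have := (mem_lrSet.mp h).1; omega
    · have := (mem_rlSet.mp h).1; omega
  · have : p = l.length := by simpa using h
    omega

theorem occG_false {R : ℕ → ℕ → ℕ → ℕ → Prop} {l : List ℕ} (h : l.length ≤ 1) :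
    ¬ OccG R l := by
  rintro ⟨i, j, k, h1, h2, h3, _⟩
  omega

theorem bax_small (h : l.length ≤ 1) : Bax l :=
  ⟨fun h2 => occG_false h (occ2413_iff.mp h2), fun h2 => occG_false h (occ3142_iff.mp h2)⟩

theorem twi_small (h : l.length ≤ 1) : Twi l :=
  ⟨fun h2 => occG_false h (occ2413_iff.mp h2), fun h2 => occG_false h (occ3412_iff.mp h2)⟩

theorem filter_small_eq {n : ℕ} (hn : n ≤ 1) :
    (permsL n).filter Bax = (permsL n).filter Twi := by
  apply Finset.filter_congr
  intro l hl
  have hlen := permsL_length hl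
  first
  | exact iff_of_true (bax_small (by omega)) (twi_small (by omega))
  | exact propext (iff_of_true (bax_small (by omega)) (twi_small (by omega)))

theorem lrSet_card_le (l : List ℕ) : (lrSet l).card ≤ l.length := by
  have h : lrSet l ⊆ Finset.range l.length := fun x hx =>
    Finset.mem_range.mpr (mem_lrSet.mp hx).1
  have := Finset.card_le_card h
  simpa using this

theorem rlSet_card_le (l : List ℕ) : (rlSet l).card ≤ l.length := by
  have h : rlSet l ⊆ Finset.range l.length := fun x hx =>
    Finset.mem_range.mpr (mem_rlSet.mp hx).1
  have := Finset.card_le_card h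
  simpa using this

theorem sum_label (Cls : List ℕ → Prop) (n : ℕ) (F : ℕ × ℕ → ℕ) :
    ∑ l ∈ (permsL n).filter Cls, F ((lrSet l).card, (rlSet l).card) =
      ∑ pq ∈ (Finset.range (n+1)) ×ˢ (Finset.range (n+1)), cnt Cls n pq * F pq := by
  have hmaps : ∀ l ∈ (permsL n).filter Cls,
      ((lrSet l).card, (rlSet l).card) ∈ (Finset.range (n+1)) ×ˢ (Finset.range (n+1)) := by
    intro l hl
    rw [Finset.mem_filter] at hl
    have hlen := permsL_length hl.1
    have h1 : (lrSet l).card ≤ n := hlen ▸ lrSet_card_le l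
    have h2 : (rlSet l).card ≤ n := hlen ▸ rlSet_card_le l
    simp only [Finset.mem_product, Finset.mem_range]
    omega
  rw [← Finset.sum_fiberwise_of_maps_to hmaps (fun l => F ((lrSet l).card, (rlSet l).card))]
  refine Finset.sum_congr rfl (fun pq hpq => ?_)
  have : ∑ l ∈ ((permsL n).filter Cls).filter
      (fun l => ((lrSet l).card, (rlSet l).card) = pq),
      F ((lrSet l).card, (rlSet l).card) =
      ∑ l ∈ ((permsL n).filter Cls).filter
      (fun l => ((lrSet l).card, (rlSet l).card) = pq), F pq := by
    refine Finset.sum_congr rfl (fun l hl => ?_)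
    rw [Finset.mem_filter] at hl
    rw [hl.2]
  rw [this, Finset.sum_const, smul_eq_mul, cnt]

theorem cnt_eq (n : ℕ) : ∀ lab, cnt Bax n lab = cnt Twi n lab := by
  induction n with
  | zero =>
    intro lab
    rw [cnt, cnt, filter_small_eq (by omega)]
  | succ m ih =>
    rcases Nat.lt_or_ge m 1 with hm | hm
    · intro lab
      rw [cnt, cnt, filter_small_eq (by omega)]
    · intro lab
      rw [cnt_rec Bax gapB bax_del bax_char (fun l hnd hne => gapB_statSpec hnd hne)
            gapB_le m hm lab,
          cnt_rec Twi gapT twi_del twi_char (fun l hnd hne => gapT_statSpec hnd hne)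
            gapT_le m hm lab]
      have h1 := sum_label Bax m (fun pq => if lab ∈ labelSet pq.1 pq.2 then 1 else 0)
      have h2 := sum_label Twi m (fun pq => if lab ∈ labelSet pq.1 pq.2 then 1 else 0)
      simp only at h1 h2
      rw [h1, h2]
      exact Finset.sum_congr rfl (fun pq _ => by rw [ih pq])

theorem card_filter_bax_eq_twi (n : ℕ) :
    ((permsL n).filter Bax).card = ((permsL n).filter Twi).card := by
  have hmaps : ∀ (Cls : List ℕ → Prop), ∀ l ∈ (permsL n).filter Cls,
      ((lrSet l).card, (rlSet l).card) ∈ (Finset.range (n+1)) ×ˢ (Finset.range (n+1)) := by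
    intro Cls l hl
    rw [Finset.mem_filter] at hl
    have hlen := permsL_length hl.1
    have h1 : (lrSet l).card ≤ n := hlen ▸ lrSet_card_le l
    have h2 : (rlSet l).card ≤ n := hlen ▸ rlSet_card_le l
    simp only [Finset.mem_product, Finset.mem_range]
    omega
  rw [Finset.card_eq_sum_card_fiberwise (hmaps Bax),
    Finset.card_eq_sum_card_fiberwise (hmaps Twi)]
  exact Finset.sum_congr rfl (fun pq _ => cnt_eq n pq)

end instantiate

section transfer
variable {n : ℕ}

def toList (σ : Equiv.Perm (Fin n)) : List ℕ := List.ofFn (fun i => (σ i : ℕ))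

theorem toList_length (σ : Equiv.Perm (Fin n)) : (toList σ).length = n := by
  simp [toList]

theorem ent_toList (σ : Equiv.Perm (Fin n)) (i : ℕ) (h : i < n) :
    ent (toList σ) i = (σ ⟨i, h⟩ : ℕ) := by
  rw [ent_eq_getElem _ (by simp [toList]; omega)]
  simp [toList]

theorem toList_nodup (σ : Equiv.Perm (Fin n)) : (toList σ).Nodup := by
  rw [toList, List.nodup_ofFn]
  intro a b hab
  exact σ.injective (Fin.val_injective hab)

theorem toList_mem_permsL (σ : Equiv.Perm (Fin n)) : toList σ ∈ permsL n := by
  rw [mem_permsL, List.perm_ext_iff_of_nodup (toList_nodup σ) (List.nodup_range (n := n))]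
  intro a
  simp only [toList, List.mem_ofFn, Set.mem_range, List.mem_range]
  constructor
  · rintro ⟨i, rfl⟩; exact (σ i).isLt
  · intro ha; exact ⟨σ.symm ⟨a, ha⟩, by simp⟩

theorem isBaxter_iff (σ : Equiv.Perm (Fin n)) : IsBaxter σ ↔ Bax (toList σ) := by
  rw [IsBaxter, Bax]
  apply and_congr
  · apply not_congr
    constructor
    · rintro ⟨i, k, j, hj, h1, h2, h3, h4, h5⟩
      refine ⟨i.1, j, k.1, h1, h2, by rw [toList_length]; exact k.isLt, ?_, ?_, ?_⟩
      · rw [ent_toList σ (j+1) hj, ent_toList σ i.1 i.isLt]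
        exact h3
      · rw [ent_toList σ i.1 i.isLt, ent_toList σ k.1 k.isLt]
        exact h4
      · rw [ent_toList σ k.1 k.isLt, ent_toList σ j (by omega)]
        exact h5
    · rintro ⟨i, j, k, h1, h2, h3, h4, h5, h6⟩
      rw [toList_length] at h3
      have hj : j + 1 < n := by omega
      refine ⟨⟨i, by omega⟩, ⟨k, h3⟩, j, hj, h1, h2, ?_, ?_, ?_⟩
      · rw [ent_toList σ (j+1) hj, ent_toList σ i (by omega)] at h4
        exact h4
      · rw [ent_toList σ i (by omega), ent_toList σ k h3] at h5
        exact h5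
      · rw [ent_toList σ k h3, ent_toList σ j (by omega)] at h6
        exact h6
  · apply not_congr
    constructor
    · rintro ⟨i, k, j, hj, h1, h2, h3, h4, h5⟩
      refine ⟨i.1, j, k.1, h1, h2, by rw [toList_length]; exact k.isLt, ?_, ?_, ?_⟩
      · rw [ent_toList σ j (by omega), ent_toList σ k.1 k.isLt]
        exact h3
      · rw [ent_toList σ k.1 k.isLt, ent_toList σ i.1 i.isLt]
        exact h4
      · rw [ent_toList σ i.1 i.isLt, ent_toList σ (j+1) hj]
        exact h5
    · rintro ⟨i, j, k, h1, h2, h3, h4, h5, h6⟩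
      rw [toList_length] at h3
      have hj : j + 1 < n := by omega
      refine ⟨⟨i, by omega⟩, ⟨k, h3⟩, j, hj, h1, h2, ?_, ?_, ?_⟩
      · rw [ent_toList σ j (by omega), ent_toList σ k h3] at h4
        exact h4
      · rw [ent_toList σ k h3, ent_toList σ i (by omega)] at h5
        exact h5
      · rw [ent_toList σ i (by omega), ent_toList σ (j+1) hj] at h6
        exact h6

theorem isTwisted_iff (σ : Equiv.Perm (Fin n)) : IsTwistedBaxter σ ↔ Twi (toList σ) := by
  rw [IsTwistedBaxter, Twi]
  rw [show (¬ Occ2413 (toList σ) ∧ ¬ Occ3412 (toList σ)) ↔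
    ¬ (Occ2413 (toList σ) ∨ Occ3412 (toList σ)) by tauto]
  apply not_congr
  constructor
  · rintro ⟨i, k, j, hj, h1, h2, h3 | h3⟩
    · left
      refine ⟨i.1, j, k.1, h1, h2, by rw [toList_length]; exact k.isLt, ?_, ?_, ?_⟩
      · rw [ent_toList σ (j+1) hj, ent_toList σ i.1 i.isLt]
        exact h3.1
      · rw [ent_toList σ i.1 i.isLt, ent_toList σ k.1 k.isLt]
        exact h3.2.1
      · rw [ent_toList σ k.1 k.isLt, ent_toList σ j (by omega)]
        exact h3.2.2
    · right
      refine ⟨i.1, j, k.1, h1, h2, by rw [toList_length]; exact k.isLt, ?_, ?_, ?_⟩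
      · rw [ent_toList σ (j+1) hj, ent_toList σ k.1 k.isLt]
        exact h3.1
      · rw [ent_toList σ k.1 k.isLt, ent_toList σ i.1 i.isLt]
        exact h3.2.1
      · rw [ent_toList σ i.1 i.isLt, ent_toList σ j (by omega)]
        exact h3.2.2
  · rintro (⟨i, j, k, h1, h2, h3, h4, h5, h6⟩ | ⟨i, j, k, h1, h2, h3, h4, h5, h6⟩)
    · rw [toList_length] at h3
      have hj : j + 1 < n := by omega
      refine ⟨⟨i, by omega⟩, ⟨k, h3⟩, j, hj, h1, h2, Or.inl ⟨?_, ?_, ?_⟩⟩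
      · rw [ent_toList σ (j+1) hj, ent_toList σ i (by omega)] at h4
        exact h4
      · rw [ent_toList σ i (by omega), ent_toList σ k h3] at h5
        exact h5
      · rw [ent_toList σ k h3, ent_toList σ j (by omega)] at h6
        exact h6
    · rw [toList_length] at h3
      have hj : j + 1 < n := by omega
      refine ⟨⟨i, by omega⟩, ⟨k, h3⟩, j, hj, h1, h2, Or.inr ⟨?_, ?_, ?_⟩⟩
      · rw [ent_toList σ (j+1) hj, ent_toList σ k h3] at h4
        exact h4
      · rw [ent_toList σ k h3, ent_toList σ i (by omega)] at h5
        exact h5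
      · rw [ent_toList σ i (by omega), ent_toList σ j (by omega)] at h6
        exact h6

theorem toList_injective : Function.Injective (toList (n := n)) := by
  intro σ τ h
  apply Equiv.ext
  intro i
  have h1 : ent (toList σ) i.1 = ent (toList τ) i.1 := by rw [h]
  rw [ent_toList σ i.1 i.isLt, ent_toList τ i.1 i.isLt] at h1
  exact Fin.val_injective (by simpa using h1)

theorem toList_surj {l : List ℕ} (hl : l ∈ permsL n) :
    ∃ σ : Equiv.Perm (Fin n), toList σ = l := by
  have hlen := permsL_length hl
  have hnd := permsL_nodup hl
  have hv := permsL_hv hl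
  have hf : ∀ i : Fin n, ent l i.1 < n := by
    intro i
    have hi : i.1 < l.length := by rw [hlen]; exact i.isLt
    have := hv _ (ent_mem l hi)
    omega
  set f : Fin n → Fin n := fun i => ⟨ent l i.1, hf i⟩ with hfdef
  have hinj : Function.Injective f := by
    intro a b hab
    by_contra hne
    have ha : a.1 < l.length := by rw [hlen]; exact a.isLt
    have hb : b.1 < l.length := by rw [hlen]; exact b.isLt
    exact ent_ne hnd ha hb
      (fun h => hne (Fin.val_injective h)) (by simpa [hfdef, Fin.ext_iff] using hab)
  refine ⟨Equiv.ofBijective f (Finite.injective_iff_bijective.mp hinj), ?_⟩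
  apply List.ext_getElem (by simp [toList, hlen])
  intro i h1 h2
  have : i < n := by simpa [toList] using h1
  simp only [toList, List.getElem_ofFn]
  rw [← ent_eq_getElem l h2]
  rfl

theorem card_univ_filter (Cls : List ℕ → Prop) (P : Equiv.Perm (Fin n) → Prop)
    (hiff : ∀ σ, P σ ↔ Cls (toList σ)) :
    (Finset.univ.filter P).card = ((permsL n).filter Cls).card := by
  apply Finset.card_bij (fun σ _ => toList σ)
  · intro σ hσ
    rw [Finset.mem_filter] at hσ ⊢
    exact ⟨toList_mem_permsL σ, (hiff σ).mp hσ.2⟩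
  · intro σ1 _ σ2 _ h
    exact toList_injective h
  · intro l hl
    rw [Finset.mem_filter] at hl
    obtain ⟨σ, rfl⟩ := toList_surj hl.1
    exact ⟨σ, Finset.mem_filter.mpr ⟨Finset.mem_univ σ, (hiff σ).mpr hl.2⟩, rfl⟩

end transfer

end
end BaxterAux

/-- The number of Baxter permutations of `[n]` equals the number of twisted
Baxter permutations of `[n]`. -/
theorem card_baxter_eq_card_twisted_baxter (n : ℕ) (hn : 1 ≤ n) :
    {σ : Equiv.Perm (Fin n) | IsBaxter σ}.ncard =
      {σ : Equiv.Perm (Fin n) | IsTwistedBaxter σ}.ncard := by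
  classical
  rw [Set.ncard_eq_toFinset_card', Set.toFinset_setOf,
    Set.ncard_eq_toFinset_card', Set.toFinset_setOf]
  rw [BaxterAux.card_univ_filter BaxterAux.Bax IsBaxter BaxterAux.isBaxter_iff,
    BaxterAux.card_univ_filter BaxterAux.Twi IsTwistedBaxter BaxterAux.isTwisted_iff]
  exact BaxterAux.card_filter_bax_eq_twi n
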